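/- arXiv:1206.1935 — 6 statements merged into one kernel-verified Lean document; each statement's English description precedes it below -/
import Mathlib

section
/- Let E be a super-operator on ℂ^d and let ρ, σ be positive semidefinite d×d complex matrices. If supp(ρ) ⊆ supp(σ) then supp(E(ρ)) ⊆ supp(E(σ)); consequently, if supp(ρ) = supp(σ) then supp(E(ρ)) = supp(E(σ)). -/
open Matrix
open scoped ComplexOrder

/-- The support of a matrix `ρ`, i.e. the range (column space) of `ρ`. -/
noncomputable def matSupp {d : ℕ} (ρ : Matrix (Fin d) (Fin d) ℂ) :
    Submodule ℂ (Fin d → ℂ) :=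
  LinearMap.range ρ.mulVecLin

/-- The super-operator with Kraus operators `E i`, applied to `ρ`:
`E(ρ) = ∑ i, E i * ρ * (E i)ᴴ`. -/
noncomputable def superApply {d n : ℕ} (E : Fin n → Matrix (Fin d) (Fin d) ℂ)
    (ρ : Matrix (Fin d) (Fin d) ℂ) : Matrix (Fin d) (Fin d) ℂ :=
  ∑ i, E i * ρ * (E i)ᴴ

lemma sum_mulVec' {d m n : ℕ} (M : Fin m → Matrix (Fin d) (Fin n) ℂ) (v : Fin n → ℂ) :
    (∑ i, M i) *ᵥ v = ∑ i, M i *ᵥ v := by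
  ext j
  simp [Matrix.mulVec, dotProduct, Matrix.sum_apply, Finset.sum_mul]
  rw [Finset.sum_comm]

lemma dotProduct_sum' {d m : ℕ} (v : Fin d → ℂ) (w : Fin m → Fin d → ℂ) :
    v ⬝ᵥ (∑ i, w i) = ∑ i, v ⬝ᵥ w i := by
  simp [dotProduct, Finset.sum_apply, Finset.mul_sum]
  rw [Finset.sum_comm]

lemma superApply_posSemidef {d n : ℕ} (E : Fin n → Matrix (Fin d) (Fin d) ℂ)
    {ρ : Matrix (Fin d) (Fin d) ℂ} (hρ : ρ.PosSemidef) :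
    (superApply E ρ).PosSemidef := by
  unfold superApply
  exact Finset.sum_induction _ _ (fun a b ha hb => ha.add hb) Matrix.PosSemidef.zero
    (fun i _ => hρ.mul_mul_conjTranspose_same (E i))

/-- If `A` is Hermitian, then `ker σ ⊆ ker ρ` follows from `range ρ ⊆ range σ`. -/
lemma ker_le_of_supp_le {d : ℕ} {ρ σ : Matrix (Fin d) (Fin d) ℂ}
    (hρ : ρ.IsHermitian) (hσ : σ.IsHermitian) (h : matSupp ρ ≤ matSupp σ) :
    LinearMap.ker σ.mulVecLin ≤ LinearMap.ker ρ.mulVecLin := by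
  intro y hy
  have hy' : σ *ᵥ y = 0 := hy
  -- `star y` annihilates the range of `σ`
  have hperp : ∀ v, star y ⬝ᵥ σ *ᵥ v = 0 := by
    intro v
    rw [dotProduct_mulVec]
    have : star y ᵥ* σ = 0 := by
      have := star_mulVec (M := σᴴ) (v := y)
      rw [conjTranspose_conjTranspose, hσ.eq, hy'] at this
      simpa using this.symm
    rw [this, zero_dotProduct]
  -- `ρ *ᵥ (ρ *ᵥ y)` lies in range ρ ⊆ range σ
  have hmem : ρ *ᵥ (ρ *ᵥ y) ∈ matSupp σ :=
    h ⟨ρ *ᵥ y, by simp [matSupp, mulVecLin_apply]⟩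
  obtain ⟨v, hv⟩ := hmem
  rw [mulVecLin_apply] at hv
  have key : star (ρ *ᵥ y) ⬝ᵥ (ρ *ᵥ y) = 0 := by
    rw [star_mulVec, hρ.eq, ← dotProduct_mulVec, ← hv]
    exact hperp v
  have : ρ *ᵥ y = 0 := dotProduct_star_self_eq_zero.mp key
  simpa [LinearMap.mem_ker, mulVecLin_apply] using this

/-- If `ρ`, `σ` are Hermitian and `ker σ ⊆ ker ρ`, then `range ρ ⊆ range σ`. -/
lemma supp_le_of_ker_le {d : ℕ} {ρ σ : Matrix (Fin d) (Fin d) ℂ}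
    (hρ : ρ.IsHermitian) (hσ : σ.IsHermitian)
    (h : LinearMap.ker σ.mulVecLin ≤ LinearMap.ker ρ.mulVecLin) :
    matSupp ρ ≤ matSupp σ := by
  -- range σ ⊔ ker σ = ⊤
  have hdisj : matSupp σ ⊓ LinearMap.ker σ.mulVecLin = ⊥ := by
    rw [Submodule.eq_bot_iff]
    rintro x ⟨⟨v, hv⟩, hx⟩
    have hx' : σ *ᵥ x = 0 := hx
    have hsx : star x = star v ᵥ* σ := by
      have := star_mulVec (M := σ) (v := v)
      rw [hσ.eq] at this
      rw [← hv]; exact this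
    have : star x ⬝ᵥ x = 0 := by
      rw [hsx, ← dotProduct_mulVec, hx', dotProduct_zero]
    exact dotProduct_star_self_eq_zero.mp this
  have htop : matSupp σ ⊔ LinearMap.ker σ.mulVecLin = ⊤ := by
    apply Submodule.eq_top_of_finrank_eq
    have h1 := Submodule.finrank_sup_add_finrank_inf_eq (matSupp σ)
      (LinearMap.ker σ.mulVecLin)
    rw [hdisj] at h1
    simp only [finrank_bot, add_zero] at h1
    rw [h1]
    exact LinearMap.finrank_range_add_finrank_ker σ.mulVecLin
  rintro u ⟨z, hz⟩
  have hu : u ∈ matSupp σ ⊔ LinearMap.ker σ.mulVecLin := htop ▸ Submodule.mem_top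
  obtain ⟨b, hb, k, hk, hbk⟩ := Submodule.mem_sup.mp hu
  obtain ⟨wσ, hwσ⟩ := id hb
  have hσk : σ *ᵥ k = 0 := hk
  have hρk : ρ *ᵥ k = 0 := h hk
  have hsk1 : star k ⬝ᵥ u = 0 := by
    have hsk : star k ᵥ* ρ = 0 := by
      have := star_mulVec (M := ρ) (v := k)
      rw [hρ.eq, hρk] at this
      simpa using this.symm
    rw [← hz, mulVecLin_apply, dotProduct_mulVec, hsk, zero_dotProduct]
  have hsk2 : star k ⬝ᵥ b = 0 := by
    have hsk : star k ᵥ* σ = 0 := by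
      have := star_mulVec (M := σ) (v := k)
      rw [hσ.eq, hσk] at this
      simpa using this.symm
    rw [← hwσ]
    simp only [mulVecLin_apply]
    rw [dotProduct_mulVec, hsk, zero_dotProduct]
  have hk0 : k = 0 := by
    apply dotProduct_star_self_eq_zero.mp
    have : k = u - b := by rw [← hbk]; ring
    rw [this, dotProduct_sub]
    rw [this] at hsk1 hsk2
    rw [hsk1, hsk2, sub_zero]
  rw [← hbk, hk0, add_zero]
  exact hb

/-- Kernel monotonicity under the super-operator. -/
lemma ker_superApply_le {d n : ℕ} (E : Fin n → Matrix (Fin d) (Fin d) ℂ)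
    {ρ σ : Matrix (Fin d) (Fin d) ℂ} (hσ : σ.PosSemidef)
    (h : LinearMap.ker σ.mulVecLin ≤ LinearMap.ker ρ.mulVecLin) :
    LinearMap.ker (superApply E σ).mulVecLin ≤ LinearMap.ker (superApply E ρ).mulVecLin := by
  intro x hx
  have hx' : (superApply E σ) *ᵥ x = 0 := hx
  -- each term of the quadratic form vanishes
  have hterm : ∀ i, star x ⬝ᵥ (E i * σ * (E i)ᴴ) *ᵥ x
      = star ((E i)ᴴ *ᵥ x) ⬝ᵥ σ *ᵥ ((E i)ᴴ *ᵥ x) := by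
    intro i
    rw [← mulVec_mulVec, ← mulVec_mulVec, dotProduct_mulVec (star x) (E i),
      star_mulVec, conjTranspose_conjTranspose]
  have hsum : ∑ i, star ((E i)ᴴ *ᵥ x) ⬝ᵥ σ *ᵥ ((E i)ᴴ *ᵥ x) = 0 := by
    have h0 : star x ⬝ᵥ (superApply E σ) *ᵥ x = 0 := by rw [hx', dotProduct_zero]
    rw [← h0]
    unfold superApply
    rw [sum_mulVec', dotProduct_sum']
    exact Finset.sum_congr rfl fun i _ => (hterm i).symm
  have hzero : ∀ i, σ *ᵥ ((E i)ᴴ *ᵥ x) = 0 := by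
    intro i
    apply (hσ.dotProduct_mulVec_zero_iff _).mp
    exact (Finset.sum_eq_zero_iff_of_nonneg
      (fun i _ => hσ.dotProduct_mulVec_nonneg ((E i)ᴴ *ᵥ x))).mp hsum i (Finset.mem_univ i)
  have hρz : ∀ i, ρ *ᵥ ((E i)ᴴ *ᵥ x) = 0 := by
    intro i
    have hmem : (E i)ᴴ *ᵥ x ∈ LinearMap.ker σ.mulVecLin := by
      simp [LinearMap.mem_ker, mulVecLin_apply, hzero i]
    simpa [LinearMap.mem_ker, mulVecLin_apply] using h hmem
  show (superApply E ρ).mulVecLin x = 0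
  rw [mulVecLin_apply]
  unfold superApply
  rw [sum_mulVec']
  apply Finset.sum_eq_zero
  intro i _
  rw [← mulVec_mulVec, ← mulVec_mulVec, hρz i, mulVec_zero]

theorem supp_superApply_mono {d n : ℕ} (E : Fin n → Matrix (Fin d) (Fin d) ℂ)
    (hE : (1 - ∑ i, (E i)ᴴ * E i).PosSemidef)
    (ρ σ : Matrix (Fin d) (Fin d) ℂ) (hρ : ρ.PosSemidef) (hσ : σ.PosSemidef) :
    (matSupp ρ ≤ matSupp σ → matSupp (superApply E ρ) ≤ matSupp (superApply E σ)) ∧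
    (matSupp ρ = matSupp σ → matSupp (superApply E ρ) = matSupp (superApply E σ)) := by
  have mono : ∀ (ρ σ : Matrix (Fin d) (Fin d) ℂ), ρ.PosSemidef → σ.PosSemidef →
      matSupp ρ ≤ matSupp σ → matSupp (superApply E ρ) ≤ matSupp (superApply E σ) := by
    intro ρ σ hρ hσ hle
    have h1 : LinearMap.ker σ.mulVecLin ≤ LinearMap.ker ρ.mulVecLin :=
      ker_le_of_supp_le hρ.1 hσ.1 hle
    have h2 := ker_superApply_le E hσ h1
    exact supp_le_of_ker_le (superApply_posSemidef E hρ).1 (superApply_posSemidef E hσ).1 h2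
  exact ⟨mono ρ σ hρ hσ, fun h => le_antisymm (mono ρ σ hρ hσ h.le) (mono σ ρ hσ hρ h.ge)⟩
end

section
/- Let E be a super-operator on ℂ^d with Kraus representation E = ∑_i E_i · E_i†, and let X be a subspace of ℂ^d. Then the pre-image of X under E satisfies E^{-1}(X) = (supp(E*(P_{X^⊥})))^⊥, where E* = ∑_i E_i† · E_i is the Schrödinger–Heisenberg dual of E, X^⊥ is the orthogonal complement of X, and P_{X^⊥} is the orthogonal projection onto X^⊥. -/
open Matrix
open scoped ComplexOrder InnerProductSpace

/-- The support of a matrix `ρ`, i.e. the range (column space) of `ρ`,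
as a subspace of the euclidean space `ℂ^d`. -/
noncomputable def esupp {d : ℕ} (ρ : Matrix (Fin d) (Fin d) ℂ) :
    Submodule ℂ (EuclideanSpace ℂ (Fin d)) :=
  LinearMap.range (Matrix.toEuclideanLin ρ)

/-- The rank-one matrix `|ψ⟩⟨ψ|` associated with a vector `ψ`. -/
def rankOne {d : ℕ} (ψ : EuclideanSpace ℂ (Fin d)) : Matrix (Fin d) (Fin d) ℂ :=
  Matrix.of fun i j => ψ i * star (ψ j)

/-- The (Schrödinger–Heisenberg) dual super-operator: `E*(ρ) = ∑ i, (E i)ᴴ * ρ * E i`. -/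
noncomputable def superApplyDual {d n : ℕ} (E : Fin n → Matrix (Fin d) (Fin d) ℂ)
    (ρ : Matrix (Fin d) (Fin d) ℂ) : Matrix (Fin d) (Fin d) ℂ :=
  ∑ i, (E i)ᴴ * ρ * E i

section aux
variable {d : ℕ}

lemma toEuclideanLin_matmul (A B : Matrix (Fin d) (Fin d) ℂ) (v : EuclideanSpace ℂ (Fin d)) :
    Matrix.toEuclideanLin (A * B) v = Matrix.toEuclideanLin A (Matrix.toEuclideanLin B v) := by
  simp [Matrix.toEuclideanLin_apply, Matrix.mulVec_mulVec, Equiv.apply_symm_apply]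

lemma inner_toEuclideanLin_left (A : Matrix (Fin d) (Fin d) ℂ) (x y : EuclideanSpace ℂ (Fin d)) :
    ⟪Matrix.toEuclideanLin A x, y⟫_ℂ = ⟪x, Matrix.toEuclideanLin Aᴴ y⟫_ℂ := by
  rw [Matrix.toEuclideanLin_conjTranspose_eq_adjoint, LinearMap.adjoint_inner_right]

lemma mem_esupp_orthogonal {ρ : Matrix (Fin d) (Fin d) ℂ} (hρ : ρ.IsHermitian)
    (ψ : EuclideanSpace ℂ (Fin d)) :
    ψ ∈ (esupp ρ)ᗮ ↔ Matrix.toEuclideanLin ρ ψ = 0 := by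
  rw [Submodule.mem_orthogonal]
  constructor
  · intro h
    rw [← inner_self_eq_zero (𝕜 := ℂ)]
    have h1 := h _ ⟨Matrix.toEuclideanLin ρ ψ, rfl⟩
    rwa [inner_toEuclideanLin_left, hρ.eq] at h1
  · intro h u hu
    obtain ⟨x, rfl⟩ := hu
    rw [inner_toEuclideanLin_left, hρ.eq, h, inner_zero_right]

lemma toEuclideanLin_rankOne (ψ v : EuclideanSpace ℂ (Fin d)) :
    Matrix.toEuclideanLin (rankOne ψ) v = ⟪ψ, v⟫_ℂ • ψ := by
  apply (WithLp.equiv 2 (Fin d → ℂ)).injective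
  funext j
  simp only [WithLp.equiv_apply, Matrix.toEuclideanLin_apply, WithLp.ofLp_smul, Pi.smul_apply,
    smul_eq_mul, Matrix.mulVec, dotProduct, rankOne, Matrix.of_apply,
    PiLp.inner_apply, RCLike.inner_apply, Finset.sum_mul]
  exact Finset.sum_congr rfl fun k _ => by rw [starRingEnd_apply]; ring

lemma toEuclideanLin_superApply {n : ℕ} (E : Fin n → Matrix (Fin d) (Fin d) ℂ)
    (ψ v : EuclideanSpace ℂ (Fin d)) :
    Matrix.toEuclideanLin (superApply E (rankOne ψ)) v
      = ∑ i, ⟪Matrix.toEuclideanLin (E i) ψ, v⟫_ℂ • Matrix.toEuclideanLin (E i) ψ := by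
  unfold superApply
  rw [map_sum, LinearMap.sum_apply]
  refine Finset.sum_congr rfl fun i _ => ?_
  rw [toEuclideanLin_matmul, toEuclideanLin_matmul, toEuclideanLin_rankOne, _root_.map_smul,
    inner_toEuclideanLin_left (E i) ψ v]

end aux

theorem preimage_eq_orthogonal_supp_dual {d n : ℕ}
    (E : Fin n → Matrix (Fin d) (Fin d) ℂ)
    (hE : (1 - ∑ i, (E i)ᴴ * E i).PosSemidef)
    (X : Submodule ℂ (EuclideanSpace ℂ (Fin d)))
    (Q : Matrix (Fin d) (Fin d) ℂ)
    (hQ : Q.IsHermitian) (hQ2 : Q * Q = Q) (hQX : esupp Q = Xᗮ) :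
    {ψ : EuclideanSpace ℂ (Fin d) | esupp (superApply E (rankOne ψ)) ≤ X}
      = (↑((esupp (superApplyDual E Q))ᗮ) : Set (EuclideanSpace ℂ (Fin d))) := by
  have hN : (superApplyDual E Q).IsHermitian := by
    show _ = _
    unfold superApplyDual
    rw [Matrix.conjTranspose_sum]
    exact Finset.sum_congr rfl fun i _ => by
      rw [Matrix.conjTranspose_mul, Matrix.conjTranspose_mul, Matrix.conjTranspose_conjTranspose,
        hQ.eq, Matrix.mul_assoc]
  have hXmem : ∀ w : EuclideanSpace ℂ (Fin d), w ∈ X ↔ Matrix.toEuclideanLin Q w = 0 := by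
    intro w
    rw [← mem_esupp_orthogonal hQ, hQX, Submodule.orthogonal_orthogonal]
  have hQQ : ∀ x : EuclideanSpace ℂ (Fin d),
      ⟪Matrix.toEuclideanLin Q x, Matrix.toEuclideanLin Q x⟫_ℂ
        = ⟪x, Matrix.toEuclideanLin Q x⟫_ℂ := by
    intro x
    rw [inner_toEuclideanLin_left, ← toEuclideanLin_matmul, hQ.eq, hQ2]
  ext ψ
  simp only [Set.mem_setOf_eq, SetLike.mem_coe]
  rw [mem_esupp_orthogonal hN]
  constructor
  · intro h
    -- each E i ψ lies in X
    have key : ∀ i, Matrix.toEuclideanLin Q (Matrix.toEuclideanLin (E i) ψ) = 0 := by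
      intro i
      rw [← hXmem, ← Submodule.orthogonal_orthogonal X, Submodule.mem_orthogonal]
      intro v hv
      have hM : Matrix.toEuclideanLin (superApply E (rankOne ψ)) v ∈ X := h ⟨v, rfl⟩
      have h0 : ⟪v, Matrix.toEuclideanLin (superApply E (rankOne ψ)) v⟫_ℂ = 0 := by
        rw [inner_eq_zero_symm]
        exact (Submodule.mem_orthogonal X v).mp hv _ hM
      rw [toEuclideanLin_superApply] at h0
      simp only [inner_sum, inner_smul_right] at h0
      have h1 : ∑ i, (Complex.normSq ⟪Matrix.toEuclideanLin (E i) ψ, v⟫_ℂ : ℂ) = 0 := by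
        rw [← h0]
        refine Finset.sum_congr rfl fun i _ => ?_
        rw [← inner_conj_symm v (Matrix.toEuclideanLin (E i) ψ), Complex.mul_conj]
      rw [← Complex.ofReal_sum, Complex.ofReal_eq_zero] at h1
      have h3 := (Finset.sum_eq_zero_iff_of_nonneg
        (fun i _ => Complex.normSq_nonneg _)).mp h1 i (Finset.mem_univ i)
      rw [inner_eq_zero_symm]
      exact Complex.normSq_eq_zero.mp h3
    unfold superApplyDual
    rw [map_sum, LinearMap.sum_apply]
    refine Finset.sum_eq_zero fun i _ => ?_
    rw [toEuclideanLin_matmul, toEuclideanLin_matmul, key i, map_zero]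
  · intro h
    have h0 : ⟪ψ, Matrix.toEuclideanLin (superApplyDual E Q) ψ⟫_ℂ = 0 := by
      rw [h, inner_zero_right]
    have hsum : ∑ i, ⟪Matrix.toEuclideanLin Q (Matrix.toEuclideanLin (E i) ψ),
        Matrix.toEuclideanLin Q (Matrix.toEuclideanLin (E i) ψ)⟫_ℂ = 0 := by
      rw [← h0]
      conv_rhs => rw [superApplyDual, map_sum, LinearMap.sum_apply, inner_sum]
      refine Finset.sum_congr rfl fun i _ => ?_
      rw [toEuclideanLin_matmul, toEuclideanLin_matmul, ← inner_toEuclideanLin_left, hQQ]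
    have hsum' : ∑ i, (‖Matrix.toEuclideanLin Q (Matrix.toEuclideanLin (E i) ψ)‖ ^ 2 : ℝ) = 0 := by
      have : ∀ i : Fin n, ⟪Matrix.toEuclideanLin Q (Matrix.toEuclideanLin (E i) ψ),
          Matrix.toEuclideanLin Q (Matrix.toEuclideanLin (E i) ψ)⟫_ℂ
          = ((‖Matrix.toEuclideanLin Q (Matrix.toEuclideanLin (E i) ψ)‖ ^ 2 : ℝ) : ℂ) :=
        fun i => by rw [inner_self_eq_norm_sq_to_K]; exact_mod_cast rfl
      rw [← Complex.ofReal_eq_zero, Complex.ofReal_sum, ← hsum]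
      exact Finset.sum_congr rfl fun i _ => (this i).symm
    have key : ∀ i, Matrix.toEuclideanLin Q (Matrix.toEuclideanLin (E i) ψ) = 0 := by
      intro i
      have := (Finset.sum_eq_zero_iff_of_nonneg
        (fun i _ => sq_nonneg _)).mp hsum' i (Finset.mem_univ i)
      have := (pow_eq_zero_iff (by norm_num)).mp this
      exact norm_eq_zero.mp this
    rintro u ⟨v, rfl⟩
    rw [toEuclideanLin_superApply]
    exact Submodule.sum_mem _ fun i _ =>
      Submodule.smul_mem _ _ ((hXmem _).mpr (key i))
end

section
/- Let {E_i} be a finite family of d×d complex matrices with ∑_i E_i† E_i ≤ I in the Loewner order, and let M = ∑_i E_i ⊗ E_i* be the d²×d² matrix representation of the super-operator E = ∑_i E_i · E_i† (Kronecker product, with E_i* the entrywise complex conjugate of E_i). Then every eigenvalue λ ∈ ℂ of M satisfies |λ| ≤ 1. -/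
open Matrix
open scoped ComplexOrder Kronecker

private def Kraus {d : ℕ} (M : Matrix (Fin d × Fin d) (Fin d × Fin d) ℂ) : Prop :=
  ∃ (n : ℕ) (E : Fin n → Matrix (Fin d) (Fin d) ℂ),
    (1 - ∑ i, (E i)ᴴ * E i).PosSemidef ∧ M = ∑ i, (E i) ⊗ₖ ((E i).map star)

private lemma map_star_mul {d : ℕ} (A B : Matrix (Fin d) (Fin d) ℂ) :
    (A * B).map star = A.map star * B.map star := by
  ext i j
  simp [Matrix.mul_apply, Matrix.map_apply, star_sum, star_mul']

private lemma posSemidef_sum {m : Type*} [Fintype m] [DecidableEq m] {ι : Type*} (s : Finset ι)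
    (f : ι → Matrix m m ℂ) (h : ∀ i ∈ s, (f i).PosSemidef) :
    (∑ i ∈ s, f i).PosSemidef := by
  classical
  induction s using Finset.induction_on with
  | empty => simpa using Matrix.PosSemidef.zero
  | insert _ _ hx ih =>
    rw [Finset.sum_insert hx]
    exact (h _ (Finset.mem_insert_self _ _)).add
      (ih fun i hi => h i (Finset.mem_insert_of_mem hi))

private lemma kraus_one {d : ℕ} : Kraus (1 : Matrix (Fin d × Fin d) (Fin d × Fin d) ℂ) := by
  refine ⟨1, fun _ => 1, ?_, ?_⟩
  · simp [Matrix.PosSemidef.zero]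
  · have h1 : ((1 : Matrix (Fin d) (Fin d) ℂ)).map (star : ℂ → ℂ) = 1 := by
      ext i j
      by_cases h : i = j <;> simp [Matrix.map_apply, Matrix.one_apply, h]
    simp [h1, Matrix.one_kronecker_one]

private lemma kraus_mul {d : ℕ} {M N : Matrix (Fin d × Fin d) (Fin d × Fin d) ℂ}
    (hM : Kraus M) (hN : Kraus N) : Kraus (M * N) := by
  classical
  obtain ⟨m, A, hA, rfl⟩ := hM
  obtain ⟨n, B, hB, rfl⟩ := hN
  let e : Fin m × Fin n ≃ Fin (m * n) := finProdFinEquiv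
  refine ⟨m * n, fun k => A (e.symm k).1 * B (e.symm k).2, ?_, ?_⟩
  · have hsum : ∑ k : Fin (m * n),
        (A (e.symm k).1 * B (e.symm k).2)ᴴ * (A (e.symm k).1 * B (e.symm k).2)
        = ∑ j, (B j)ᴴ * (∑ i, (A i)ᴴ * A i) * B j := by
      rw [← Equiv.sum_comp e (fun k => (A (e.symm k).1 * B (e.symm k).2)ᴴ *
        (A (e.symm k).1 * B (e.symm k).2))]
      simp only [Equiv.symm_apply_apply]
      rw [Fintype.sum_prod_type_right]
      refine Finset.sum_congr rfl fun j _ => ?_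
      rw [Finset.mul_sum, Finset.sum_mul]
      refine Finset.sum_congr rfl fun i _ => ?_
      simp only [Matrix.conjTranspose_mul, mul_assoc]
    rw [hsum]
    have key : (1 : Matrix (Fin d) (Fin d) ℂ) - ∑ j, (B j)ᴴ * (∑ i, (A i)ᴴ * A i) * B j
        = (1 - ∑ j, (B j)ᴴ * B j) + ∑ j, (B j)ᴴ * (1 - ∑ i, (A i)ᴴ * A i) * B j := by
      have : ∀ j, (B j)ᴴ * (1 - ∑ i, (A i)ᴴ * A i) * B j
          = (B j)ᴴ * B j - (B j)ᴴ * (∑ i, (A i)ᴴ * A i) * B j := by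
        intro j; rw [mul_sub, mul_one, sub_mul]
      simp only [this, Finset.sum_sub_distrib]
      abel
    rw [key]
    exact hB.add (posSemidef_sum _ _ fun j _ => hA.conjTranspose_mul_mul_same (B j))
  · rw [Finset.sum_mul_sum]
    rw [← Equiv.sum_comp e (fun k => (A (e.symm k).1 * B (e.symm k).2) ⊗ₖ
      ((A (e.symm k).1 * B (e.symm k).2).map star))]
    simp only [Equiv.symm_apply_apply]
    rw [Fintype.sum_prod_type]
    refine Finset.sum_congr rfl fun i _ => Finset.sum_congr rfl fun j _ => ?_
    rw [map_star_mul, Matrix.mul_kronecker_mul]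

private lemma kraus_diag_bound {d n : ℕ} (E : Fin n → Matrix (Fin d) (Fin d) ℂ)
    (hE : (1 - ∑ i, (E i)ᴴ * E i).PosSemidef) (a c : Fin d) :
    ∑ i, ‖E i a c‖ ^ 2 ≤ 1 := by
  classical
  set S : Matrix (Fin d) (Fin d) ℂ := ∑ i, (E i)ᴴ * E i with hS
  have hdiag : S c c = ↑(∑ i, ∑ b, ‖E i b c‖ ^ 2) := by
    push_cast
    rw [hS]
    simp only [Matrix.sum_apply, Matrix.mul_apply, Matrix.conjTranspose_apply]
    refine Finset.sum_congr rfl fun i _ => Finset.sum_congr rfl fun b _ => ?_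
    rw [mul_comm, show (star (E i b c)) = (starRingEnd ℂ) (E i b c) from rfl,
      Complex.mul_conj]
    norm_cast
    exact (Complex.sq_norm _).symm
  have h0 := hE.dotProduct_mulVec_nonneg (Pi.single c (1:ℂ))
  have hent : dotProduct (star (Pi.single c (1:ℂ))) ((1 - S) *ᵥ Pi.single c (1:ℂ))
      = (1 - S) c c := by
    simp [dotProduct, Matrix.mulVec, Pi.single_apply, apply_ite, Finset.sum_ite_eq',
      mul_ite, ite_mul]
  rw [hent] at h0
  have h1 : 0 ≤ ((1 - S) c c).re := (Complex.nonneg_iff.mp h0).1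
  have h2 : ((1 - S) c c).re = 1 - ∑ i, ∑ b, ‖E i b c‖ ^ 2 := by
    rw [Matrix.sub_apply, hdiag, Complex.sub_re, Complex.ofReal_re]
    simp
  rw [h2] at h1
  have h3 : ∑ i, ‖E i a c‖ ^ 2 ≤ ∑ i, ∑ b, ‖E i b c‖ ^ 2 := by
    refine Finset.sum_le_sum fun i _ => ?_
    exact Finset.single_le_sum (f := fun b => ‖E i b c‖ ^ 2)
      (fun b _ => sq_nonneg _) (Finset.mem_univ a)
  linarith

private lemma kraus_entry_bound {d : ℕ} {M : Matrix (Fin d × Fin d) (Fin d × Fin d) ℂ}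
    (hM : Kraus M) (p q : Fin d × Fin d) : ‖M p q‖ ≤ 1 := by
  obtain ⟨n, E, hE, rfl⟩ := hM
  obtain ⟨a, b⟩ := p; obtain ⟨c, e⟩ := q
  have hentry : (∑ i, (E i) ⊗ₖ ((E i).map star)) (a,b) (c,e)
      = ∑ i, E i a c * star (E i b e) := by
    simp [Matrix.sum_apply, Matrix.kroneckerMap_apply, Matrix.map_apply]
  rw [hentry]
  have h1 : ‖∑ i, E i a c * star (E i b e)‖
      ≤ ∑ i, ‖E i a c‖ * ‖E i b e‖ := by
    refine le_trans (norm_sum_le _ _) (le_of_eq ?_)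
    refine Finset.sum_congr rfl fun i _ => ?_
    rw [norm_mul]
    congr 1
    exact norm_star _
  refine h1.trans ?_
  have hca := Finset.sum_mul_sq_le_sq_mul_sq Finset.univ
    (fun i => ‖E i a c‖) (fun i => ‖E i b e‖)
  have hf : ∑ i, ‖E i a c‖ ^ 2 ≤ 1 := kraus_diag_bound E hE a c
  have hg : ∑ i, ‖E i b e‖ ^ 2 ≤ 1 := kraus_diag_bound E hE b e
  have hpos : (0:ℝ) ≤ ∑ i, ‖E i a c‖ * ‖E i b e‖ :=
    Finset.sum_nonneg fun i _ => mul_nonneg (norm_nonneg _) (norm_nonneg _)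
  have hfpos : (0:ℝ) ≤ ∑ i, ‖E i a c‖ ^ 2 :=
    Finset.sum_nonneg fun i _ => sq_nonneg _
  nlinarith [hca]

private lemma kraus_pow {d : ℕ} {M : Matrix (Fin d × Fin d) (Fin d × Fin d) ℂ}
    (hM : Kraus M) (k : ℕ) : Kraus (M ^ k) := by
  induction k with
  | zero => simpa [pow_zero] using kraus_one
  | succ k ih => rw [pow_succ]; exact kraus_mul ih hM

theorem eigenvalue_matrixRep_le_one {d n : ℕ}
    (E : Fin n → Matrix (Fin d) (Fin d) ℂ)
    (hE : (1 - ∑ i, (E i)ᴴ * E i).PosSemidef)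
    (M : Matrix (Fin d × Fin d) (Fin d × Fin d) ℂ)
    (hM : M = ∑ i, (E i) ⊗ₖ ((E i).map star))
    (lam : ℂ) (v : Fin d × Fin d → ℂ) (hv : v ≠ 0)
    (hev : M.mulVec v = lam • v) :
    ‖lam‖ ≤ 1 := by
  have hK : Kraus M := ⟨n, E, hE, hM⟩
  obtain ⟨j, hj⟩ : ∃ j, v j ≠ 0 := Function.ne_iff.mp hv
  set C : ℝ := ∑ l, ‖v l‖ with hC
  have hpow : ∀ k : ℕ, (M ^ k) *ᵥ v = lam ^ k • v := by
    intro k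
    induction k with
    | zero => simp
    | succ k ih =>
      rw [pow_succ, ← Matrix.mulVec_mulVec, hev, Matrix.mulVec_smul, ih, smul_smul]
      rw [pow_succ']
  have key : ∀ k : ℕ, ‖lam‖ ^ k * ‖v j‖ ≤ C := by
    intro k
    have h1 : ((M ^ k) *ᵥ v) j = lam ^ k * v j := by
      rw [hpow k]; simp [Pi.smul_apply, smul_eq_mul]
    have h2 : ‖((M ^ k) *ᵥ v) j‖ ≤ C := by
      simp only [Matrix.mulVec, dotProduct]
      refine le_trans (norm_sum_le _ _) ?_
      rw [hC]
      refine Finset.sum_le_sum fun l _ => ?_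
      rw [norm_mul]
      exact mul_le_of_le_one_left (norm_nonneg _)
        (kraus_entry_bound (kraus_pow hK k) j l)
    rw [h1, norm_mul, norm_pow] at h2
    exact h2
  by_contra hc
  push_neg at hc
  obtain ⟨k, hk⟩ := pow_unbounded_of_one_lt (C / ‖v j‖) hc
  have hvj : 0 < ‖v j‖ := norm_pos_iff.mpr hj
  have : C < ‖lam‖ ^ k * ‖v j‖ := by
    rw [div_lt_iff₀ hvj] at hk
    exact hk
  exact absurd (key k) (not_le.mpr this)
end

section
/- Let P = ({E_k : k ∈ K}, {M_0, M_1}) be a concurrent quantum program on ℂ^d with input a partial density operator ρ_0, and let F = ∑_{k∈K} F_k. Then the reachable space satisfies H_R = ⋁_{f ∈ K*} supp(F_f(ρ_0)) = supp(∑_{i=0}^{d−1} F^i(ρ_0)), where F^i denotes the i-fold composition of F. -/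
open Matrix
open scoped ComplexOrder

/-- The super-operator `F_k(ρ) = E_k(M₁ ρ M₁ᴴ)` of process `k`, where the
super-operator `E_k` has Kraus operators `E k i`. -/
noncomputable def progF {d m n : ℕ} (E : Fin m → Fin n → Matrix (Fin d) (Fin d) ℂ)
    (M₁ : Matrix (Fin d) (Fin d) ℂ) (k : Fin m)
    (ρ : Matrix (Fin d) (Fin d) ℂ) : Matrix (Fin d) (Fin d) ℂ :=
  ∑ i, E k i * (M₁ * ρ * M₁ᴴ) * (E k i)ᴴ

/-- For a finite string `f = s₁s₂⋯sₙ`, the super-operator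
`F_f = F_{sₙ} ∘ ⋯ ∘ F_{s₂} ∘ F_{s₁}` (the identity for the empty string). -/
noncomputable def progFStr {d m n : ℕ} (E : Fin m → Fin n → Matrix (Fin d) (Fin d) ℂ)
    (M₁ : Matrix (Fin d) (Fin d) ℂ) :
    List (Fin m) → Matrix (Fin d) (Fin d) ℂ → Matrix (Fin d) (Fin d) ℂ
  | [], ρ => ρ
  | k :: f, ρ => progFStr E M₁ f (progF E M₁ k ρ)

/-! ### Core linear-algebra lemmas about supports of Hermitian/PSD matrices -/

section Core
variable {d : ℕ} {A B C : Matrix (Fin d) (Fin d) ℂ}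

lemma herm_ker_range_orth (hC : C.IsHermitian) {y v : Fin d → ℂ}
    (hy : C *ᵥ y = 0) (hv : v ∈ matSupp C) : star y ⬝ᵥ v = 0 := by
  obtain ⟨x, rfl⟩ := hv
  show star y ⬝ᵥ C *ᵥ x = 0
  rw [dotProduct_mulVec, show star y ᵥ* C = star (Cᴴ *ᵥ y) by
    rw [star_mulVec, conjTranspose_conjTranspose], hC.eq, hy]
  simp

lemma herm_mem_ker_range (hC : C.IsHermitian) {v : Fin d → ℂ}
    (h1 : C *ᵥ v = 0) (h2 : v ∈ matSupp C) : v = 0 :=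
  dotProduct_star_self_eq_zero.mp (herm_ker_range_orth hC h1 h2)

/-- For Hermitian C, ℂ^d = range C ⊔ ker C. -/
lemma herm_range_sup_ker (hC : C.IsHermitian) :
    matSupp C ⊔ LinearMap.ker C.mulVecLin = ⊤ := by
  have hdisj : matSupp C ⊓ LinearMap.ker C.mulVecLin = ⊥ := by
    rw [eq_bot_iff]
    rintro v ⟨hv1, hv2⟩
    exact herm_mem_ker_range hC hv2 hv1
  apply Submodule.eq_top_of_finrank_eq
  have h1 := Submodule.finrank_sup_add_finrank_inf_eq (matSupp C) (LinearMap.ker C.mulVecLin)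
  rw [hdisj] at h1
  simp only [finrank_bot, add_zero] at h1
  rw [h1]
  exact LinearMap.finrank_range_add_finrank_ker C.mulVecLin

/-- Key: Hermitian A C with ker C ≤ ker A implies range A ≤ range C. -/
lemma matSupp_le_of_ker_le (hA : A.IsHermitian) (hC : C.IsHermitian)
    (h : LinearMap.ker C.mulVecLin ≤ LinearMap.ker A.mulVecLin) :
    matSupp A ≤ matSupp C := by
  intro v hv
  have hvtop : v ∈ matSupp C ⊔ LinearMap.ker C.mulVecLin := by
    rw [herm_range_sup_ker hC]; trivial
  obtain ⟨c, hc, k, hk, rfl⟩ := Submodule.mem_sup.mp hvtop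
  have hk' : C *ᵥ k = 0 := hk
  have hkA : A *ᵥ k = 0 := h hk
  have h1 : star k ⬝ᵥ (c + k) = 0 := herm_ker_range_orth hA hkA hv
  have h2 : star k ⬝ᵥ c = 0 := herm_ker_range_orth hC hk' hc
  have h3 : star k ⬝ᵥ k = 0 := by
    have := h1; rw [dotProduct_add, h2, zero_add] at this; exact this
  rw [dotProduct_star_self_eq_zero.mp h3, add_zero]
  exact hc

/-- Converse: PSD A, Hermitian B, range A ≤ range B implies ker B ≤ ker A. -/
lemma ker_le_of_matSupp_le (hA : A.PosSemidef) (hB : B.IsHermitian)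
    (h : matSupp A ≤ matSupp B) :
    LinearMap.ker B.mulVecLin ≤ LinearMap.ker A.mulVecLin := by
  intro y hy
  have hy' : B *ᵥ y = 0 := hy
  have hAy : A *ᵥ y ∈ matSupp B := h ⟨y, rfl⟩
  have : star y ⬝ᵥ A *ᵥ y = 0 := herm_ker_range_orth hB hy' hAy
  exact (hA.dotProduct_mulVec_zero_iff y).mp this

/-- Support of sum of PSD matrices. -/
lemma matSupp_add (hA : A.PosSemidef) (hB : B.PosSemidef) :
    matSupp (A + B) = matSupp A ⊔ matSupp B := by
  apply le_antisymm
  · rintro v ⟨x, rfl⟩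
    have hx : (A + B).mulVecLin x = A.mulVecLin x + B.mulVecLin x := by
      simp [mulVecLin_apply, add_mulVec]
    rw [hx]
    exact Submodule.add_mem_sup (LinearMap.mem_range_self _ x) (LinearMap.mem_range_self _ x)
  · have key : ∀ {A B : Matrix (Fin d) (Fin d) ℂ}, A.PosSemidef → B.PosSemidef →
        matSupp A ≤ matSupp (A + B) := by
      intro A B hA hB
      apply matSupp_le_of_ker_le hA.1 (hA.add hB).1
      intro x hx
      have hx' : (A + B) *ᵥ x = 0 := hx
      have h0 : star x ⬝ᵥ A *ᵥ x + star x ⬝ᵥ B *ᵥ x = 0 := by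
        rw [← dotProduct_add, ← add_mulVec, hx', dotProduct_zero]
      have hA0 : star x ⬝ᵥ A *ᵥ x = 0 :=
        le_antisymm (by rw [← h0]; exact le_add_of_nonneg_right (hB.dotProduct_mulVec_nonneg x)) (hA.dotProduct_mulVec_nonneg x)
      exact (hA.dotProduct_mulVec_zero_iff x).mp hA0
    apply sup_le (key hA hB)
    rw [add_comm]; exact key hB hA

lemma matSupp_zero : matSupp (0 : Matrix (Fin d) (Fin d) ℂ) = ⊥ := by
  simp [matSupp]

lemma psd_sum {α : Type*} (s : Finset α) (f : α → Matrix (Fin d) (Fin d) ℂ)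
    (hf : ∀ a ∈ s, (f a).PosSemidef) : (∑ a ∈ s, f a).PosSemidef := by
  classical
  induction s using Finset.induction with
  | empty => rw [Finset.sum_empty]; exact PosSemidef.zero
  | @insert a s ha ih =>
    rw [Finset.sum_insert ha]
    exact (hf a (Finset.mem_insert_self _ _)).add
      (ih fun b hb => hf b (Finset.mem_insert_of_mem hb))

lemma matSupp_sum {α : Type*} (s : Finset α) (f : α → Matrix (Fin d) (Fin d) ℂ)
    (hf : ∀ a ∈ s, (f a).PosSemidef) :
    matSupp (∑ a ∈ s, f a) = s.sup fun a => matSupp (f a) := by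
  classical
  induction s using Finset.induction with
  | empty => rw [Finset.sum_empty, Finset.sup_empty, matSupp_zero]
  | @insert a s ha ih =>
    rw [Finset.sum_insert ha,
      matSupp_add (hf a (Finset.mem_insert_self _ _))
        (psd_sum s f fun b hb => hf b (Finset.mem_insert_of_mem hb)),
      ih fun b hb => hf b (Finset.mem_insert_of_mem hb), Finset.sup_insert]

end Core

/-! ### Lemmas about `progF`, `progFStr` and the summed super-operator -/

section PF
variable {d m n : ℕ} (E : Fin m → Fin n → Matrix (Fin d) (Fin d) ℂ)
    (M₁ : Matrix (Fin d) (Fin d) ℂ)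

lemma progF_eq (k : Fin m) (ρ : Matrix (Fin d) (Fin d) ℂ) :
    progF E M₁ k ρ = ∑ i, (E k i * M₁) * ρ * (E k i * M₁)ᴴ := by
  unfold progF
  refine Finset.sum_congr rfl fun i _ => ?_
  rw [conjTranspose_mul]
  simp only [Matrix.mul_assoc]

lemma progF_psd (k : Fin m) {ρ : Matrix (Fin d) (Fin d) ℂ} (hρ : ρ.PosSemidef) :
    (progF E M₁ k ρ).PosSemidef := by
  rw [progF_eq]
  exact psd_sum _ _ fun i _ => hρ.mul_mul_conjTranspose_same _

lemma progF_add (k : Fin m) (ρ σ : Matrix (Fin d) (Fin d) ℂ) :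
    progF E M₁ k (ρ + σ) = progF E M₁ k ρ + progF E M₁ k σ := by
  simp only [progF_eq, Matrix.add_mul, Matrix.mul_add, ← Finset.sum_add_distrib]

lemma progF_sum {α : Type*} (k : Fin m) (s : Finset α) (f : α → Matrix (Fin d) (Fin d) ℂ) :
    progF E M₁ k (∑ a ∈ s, f a) = ∑ a ∈ s, progF E M₁ k (f a) := by
  classical
  induction s using Finset.induction with
  | empty => simp [progF]
  | @insert a s ha ih => rw [Finset.sum_insert ha, progF_add, ih, Finset.sum_insert ha]

lemma progFStr_psd (f : List (Fin m)) {ρ : Matrix (Fin d) (Fin d) ℂ} (hρ : ρ.PosSemidef) :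
    (progFStr E M₁ f ρ).PosSemidef := by
  induction f generalizing ρ with
  | nil => exact hρ
  | cons k f ih => exact ih (progF_psd E M₁ k hρ)

lemma progFStr_sum {α : Type*} (f : List (Fin m)) (s : Finset α)
    (h : α → Matrix (Fin d) (Fin d) ℂ) :
    progFStr E M₁ f (∑ a ∈ s, h a) = ∑ a ∈ s, progFStr E M₁ f (h a) := by
  induction f generalizing h with
  | nil => rfl
  | cons k f ih =>
    show progFStr E M₁ f (progF E M₁ k (∑ a ∈ s, h a)) = _
    rw [progF_sum, ih]
    exact Finset.sum_congr rfl fun a _ => rfl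

/-- The summed super-operator `F`. -/
lemma Fsum_psd {ρ : Matrix (Fin d) (Fin d) ℂ} (hρ : ρ.PosSemidef) :
    (∑ k, progF E M₁ k ρ).PosSemidef :=
  psd_sum _ _ fun k _ => progF_psd E M₁ k hρ

lemma sum_mulVec'_s10 {d : ℕ} {α : Type*} (s : Finset α) (f : α → Matrix (Fin d) (Fin d) ℂ)
    (x : Fin d → ℂ) : (∑ a ∈ s, f a) *ᵥ x = ∑ a ∈ s, f a *ᵥ x := by
  classical
  induction s using Finset.induction with
  | empty => simp
  | @insert a s ha ih => rw [Finset.sum_insert ha, Finset.sum_insert ha, add_mulVec, ih]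

lemma dotProduct_sum'_s10 {d : ℕ} {α : Type*} (s : Finset α) (v : Fin d → ℂ)
    (f : α → Fin d → ℂ) : v ⬝ᵥ (∑ a ∈ s, f a) = ∑ a ∈ s, v ⬝ᵥ f a := by
  classical
  induction s using Finset.induction with
  | empty => simp
  | @insert a s ha ih => rw [Finset.sum_insert ha, Finset.sum_insert ha, dotProduct_add, ih]

lemma conj_dot (N ρ : Matrix (Fin d) (Fin d) ℂ) (x : Fin d → ℂ) :
    star x ⬝ᵥ (N * ρ * Nᴴ) *ᵥ x = star (Nᴴ *ᵥ x) ⬝ᵥ ρ *ᵥ (Nᴴ *ᵥ x) := by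
  rw [← mulVec_mulVec, ← mulVec_mulVec, dotProduct_mulVec,
    show star x ᵥ* N = star (Nᴴ *ᵥ x) by rw [star_mulVec, conjTranspose_conjTranspose]]

/-- Kernel characterization of the summed super-operator applied to a PSD matrix. -/
lemma Fsum_mulVec_eq_zero_iff {ρ : Matrix (Fin d) (Fin d) ℂ} (hρ : ρ.PosSemidef)
    (x : Fin d → ℂ) :
    (∑ k, progF E M₁ k ρ) *ᵥ x = 0 ↔
      ∀ k i, ρ *ᵥ ((E k i * M₁)ᴴ *ᵥ x) = 0 := by
  rw [← (Fsum_psd E M₁ hρ).dotProduct_mulVec_zero_iff]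
  have hexp : star x ⬝ᵥ (∑ k, progF E M₁ k ρ) *ᵥ x
      = ∑ k, ∑ i, star ((E k i * M₁)ᴴ *ᵥ x) ⬝ᵥ ρ *ᵥ ((E k i * M₁)ᴴ *ᵥ x) := by
    rw [sum_mulVec'_s10, dotProduct_sum'_s10]
    refine Finset.sum_congr rfl fun k _ => ?_
    rw [progF_eq, sum_mulVec'_s10, dotProduct_sum'_s10]
    exact Finset.sum_congr rfl fun i _ => conj_dot _ _ _
  rw [hexp]
  constructor
  · intro h0 k i
    have hk : ∑ i, star ((E k i * M₁)ᴴ *ᵥ x) ⬝ᵥ ρ *ᵥ ((E k i * M₁)ᴴ *ᵥ x) = 0 :=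
      (Finset.sum_eq_zero_iff_of_nonneg fun k _ =>
        Finset.sum_nonneg fun i _ => hρ.dotProduct_mulVec_nonneg _).mp h0 k (Finset.mem_univ k)
    have hi := (Finset.sum_eq_zero_iff_of_nonneg fun i _ => hρ.dotProduct_mulVec_nonneg _).mp hk i (Finset.mem_univ i)
    exact (hρ.dotProduct_mulVec_zero_iff _).mp hi
  · intro h0
    refine Finset.sum_eq_zero fun k _ => Finset.sum_eq_zero fun i _ => ?_
    rw [h0 k i, dotProduct_zero]

lemma ker_Fsum_mono {ρ σ : Matrix (Fin d) (Fin d) ℂ} (hρ : ρ.PosSemidef) (hσ : σ.PosSemidef)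
    (h : LinearMap.ker ρ.mulVecLin ≤ LinearMap.ker σ.mulVecLin) :
    LinearMap.ker (∑ k, progF E M₁ k ρ).mulVecLin
      ≤ LinearMap.ker (∑ k, progF E M₁ k σ).mulVecLin := by
  intro x hx
  have hx' : (∑ k, progF E M₁ k ρ) *ᵥ x = 0 := hx
  rw [Fsum_mulVec_eq_zero_iff E M₁ hρ] at hx'
  show (∑ k, progF E M₁ k σ) *ᵥ x = 0
  rw [Fsum_mulVec_eq_zero_iff E M₁ hσ]
  exact fun k i => h (hx' k i)

lemma matSupp_Fsum_congr {ρ σ : Matrix (Fin d) (Fin d) ℂ} (hρ : ρ.PosSemidef)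
    (hσ : σ.PosSemidef) (h : matSupp ρ = matSupp σ) :
    matSupp (∑ k, progF E M₁ k ρ) = matSupp (∑ k, progF E M₁ k σ) := by
  have h1 := ker_le_of_matSupp_le hρ hσ.1 h.le
  have h2 := ker_le_of_matSupp_le hσ hρ.1 h.ge
  exact le_antisymm
    (matSupp_le_of_ker_le (Fsum_psd E M₁ hρ).1 (Fsum_psd E M₁ hσ).1
      (ker_Fsum_mono E M₁ hσ hρ h1))
    (matSupp_le_of_ker_le (Fsum_psd E M₁ hσ).1 (Fsum_psd E M₁ hρ).1
      (ker_Fsum_mono E M₁ hρ hσ h2))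

/-- Iterates of `F` expand as sums over strings. -/
lemma Fsum_iterate (i : ℕ) (ρ : Matrix (Fin d) (Fin d) ℂ) :
    (fun ρ => ∑ k, progF E M₁ k ρ)^[i] ρ
      = ∑ g : Fin i → Fin m, progFStr E M₁ (List.ofFn g) ρ := by
  induction i generalizing ρ with
  | zero =>
    rw [Function.iterate_zero_apply]
    rw [Fintype.sum_subsingleton _ (fun j : Fin 0 => j.elim0)]
    simp [progFStr]
  | succ i ih =>
    rw [Function.iterate_succ_apply, ih]
    have : ∀ g : Fin i → Fin m,
        progFStr E M₁ (List.ofFn g) (∑ k, progF E M₁ k ρ)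
          = ∑ k, progFStr E M₁ (List.ofFn g) (progF E M₁ k ρ) := fun g =>
      progFStr_sum E M₁ _ _ _
    rw [Finset.sum_congr rfl fun g _ => this g, Finset.sum_comm, ← Fintype.sum_prod_type']
    refine Fintype.sum_equiv (Fin.consEquiv fun _ => Fin m) _ _ fun p => ?_
    have hofn : List.ofFn (Fin.consEquiv (fun _ => Fin m) p) = p.1 :: List.ofFn p.2 := by
      simp [List.ofFn_succ, Fin.consEquiv]
    rw [hofn]
    rfl

lemma iter_psd {ρ₀ : Matrix (Fin d) (Fin d) ℂ} (hρ₀ : ρ₀.PosSemidef) (i : ℕ) :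
    ((fun ρ => ∑ k, progF E M₁ k ρ)^[i] ρ₀).PosSemidef := by
  induction i with
  | zero => exact hρ₀
  | succ i ih => rw [Function.iterate_succ_apply']; exact Fsum_psd E M₁ ih

end PF

/-! ### The partial sums `Σ_N` and the stabilization argument -/

noncomputable def sigmaSum {d m n : ℕ} (E : Fin m → Fin n → Matrix (Fin d) (Fin d) ℂ)
    (M₁ : Matrix (Fin d) (Fin d) ℂ) (ρ₀ : Matrix (Fin d) (Fin d) ℂ) (N : ℕ) :
    Matrix (Fin d) (Fin d) ℂ :=
  ∑ i ∈ Finset.range N, (fun ρ => ∑ k, progF E M₁ k ρ)^[i] ρ₀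

section Sig
variable {d m n : ℕ} (E : Fin m → Fin n → Matrix (Fin d) (Fin d) ℂ)
    (M₁ : Matrix (Fin d) (Fin d) ℂ) {ρ₀ : Matrix (Fin d) (Fin d) ℂ}

lemma sigma_psd (hρ₀ : ρ₀.PosSemidef) (N : ℕ) : (sigmaSum E M₁ ρ₀ N).PosSemidef :=
  psd_sum _ _ fun i _ => iter_psd E M₁ hρ₀ i

lemma sigma_succ (N : ℕ) :
    sigmaSum E M₁ ρ₀ (N + 1)
      = sigmaSum E M₁ ρ₀ N + (fun ρ => ∑ k, progF E M₁ k ρ)^[N] ρ₀ :=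
  Finset.sum_range_succ _ _

lemma sigma_succ' (N : ℕ) :
    sigmaSum E M₁ ρ₀ (N + 1) = ρ₀ + ∑ k, progF E M₁ k (sigmaSum E M₁ ρ₀ N) := by
  unfold sigmaSum
  rw [Finset.sum_range_succ']
  rw [Finset.sum_congr rfl fun i (_ : i ∈ Finset.range N) =>
    (Function.iterate_succ_apply' (fun ρ => ∑ k, progF E M₁ k ρ) i ρ₀)]
  rw [add_comm]
  congr 1
  rw [Finset.sum_comm]
  exact Finset.sum_congr rfl fun k _ => (progF_sum E M₁ k _ _).symm

lemma sigma_mono (hρ₀ : ρ₀.PosSemidef) (N : ℕ) :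
    matSupp (sigmaSum E M₁ ρ₀ N) ≤ matSupp (sigmaSum E M₁ ρ₀ (N + 1)) := by
  rw [sigma_succ, matSupp_add (sigma_psd E M₁ hρ₀ N) (iter_psd E M₁ hρ₀ N)]
  exact le_sup_left

lemma sigma_prop (hρ₀ : ρ₀.PosSemidef) (N : ℕ)
    (h : matSupp (sigmaSum E M₁ ρ₀ N) = matSupp (sigmaSum E M₁ ρ₀ (N + 1))) :
    matSupp (sigmaSum E M₁ ρ₀ (N + 1)) = matSupp (sigmaSum E M₁ ρ₀ (N + 2)) := by
  have key := matSupp_Fsum_congr E M₁ (sigma_psd E M₁ hρ₀ N) (sigma_psd E M₁ hρ₀ (N + 1)) h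
  rw [sigma_succ' E M₁ N, sigma_succ' E M₁ (N + 1),
    matSupp_add hρ₀ (Fsum_psd E M₁ (sigma_psd E M₁ hρ₀ N)),
    matSupp_add hρ₀ (Fsum_psd E M₁ (sigma_psd E M₁ hρ₀ (N + 1))), key]

end Sig

/-- Abstract stabilization of a chain of submodules of `ℂ^d`. -/
lemma chain_le {d : ℕ} (S : ℕ → Submodule ℂ (Fin d → ℂ))
    (mono : ∀ N, S N ≤ S (N + 1))
    (prop : ∀ N, S N = S (N + 1) → S (N + 1) = S (N + 2)) (N : ℕ) : S N ≤ S d := by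
  have mono' : Monotone S := monotone_nat_of_le_succ mono
  have hP : ∀ K, S K = S (K + 1) → ∀ M, K ≤ M → S M = S (M + 1) := by
    intro K hK M hM
    induction M, hM using Nat.le_induction with
    | base => exact hK
    | succ M hM ih => exact prop M ih
  have const : ∀ K, S K = S (K + 1) → ∀ M, K ≤ M → S M = S K := by
    intro K hK M hM
    induction M, hM using Nat.le_induction with
    | base => rfl
    | succ M hM ih => rw [← ih]; exact (hP K hK M hM).symm
  have hfin : ∀ T : Submodule ℂ (Fin d → ℂ), Module.finrank ℂ T ≤ d := by
    intro T
    have h := Submodule.finrank_le T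
    simpa using h
  have hex : ∃ K ≤ d, S K = S (K + 1) := by
    by_contra h
    push_neg at h
    have grow : ∀ N ≤ d, N ≤ Module.finrank ℂ (S N) := by
      intro N
      induction N with
      | zero => intro _; exact Nat.zero_le _
      | succ N ih =>
        intro hN
        have h1 := ih (Nat.le_of_succ_le hN)
        have h2 : S N < S (N + 1) := lt_of_le_of_ne (mono N) (h N (Nat.le_of_succ_le hN))
        have h3 := Submodule.finrank_lt_finrank_of_lt h2
        omega
    have h1 := grow d le_rfl
    have h2 : S d < S (d + 1) := lt_of_le_of_ne (mono d) (h d le_rfl)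
    have h3 := Submodule.finrank_lt_finrank_of_lt h2
    have h4 := hfin (S (d + 1))
    omega
  obtain ⟨K, hKd, hK⟩ := hex
  rcases le_total N d with h | h
  · exact mono' h
  · exact le_of_eq ((const K hK N (hKd.trans h)).trans (const K hK d hKd).symm)

theorem reachable_space_eq {d m n : ℕ}
    (E : Fin m → Fin n → Matrix (Fin d) (Fin d) ℂ)
    (M₀ M₁ : Matrix (Fin d) (Fin d) ℂ)
    (hE : ∀ k, ∑ i, (E k i)ᴴ * E k i = 1)
    (hM : M₀ᴴ * M₀ + M₁ᴴ * M₁ = 1)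
    (ρ₀ : Matrix (Fin d) (Fin d) ℂ) (hρ₀ : ρ₀.PosSemidef) (htr : ρ₀.trace ≤ 1) :
    (⨆ f : List (Fin m), matSupp (progFStr E M₁ f ρ₀))
      = matSupp (∑ i ∈ Finset.range d, (fun ρ => ∑ k, progF E M₁ k ρ)^[i] ρ₀) := by
  have hchain : ∀ N, matSupp (sigmaSum E M₁ ρ₀ N) ≤ matSupp (sigmaSum E M₁ ρ₀ d) :=
    chain_le _ (sigma_mono E M₁ hρ₀) (sigma_prop E M₁ hρ₀)
  have hiter : ∀ i : ℕ, matSupp ((fun ρ => ∑ k, progF E M₁ k ρ)^[i] ρ₀)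
      = Finset.univ.sup fun g : Fin i → Fin m => matSupp (progFStr E M₁ (List.ofFn g) ρ₀) := by
    intro i
    rw [Fsum_iterate]
    exact matSupp_sum _ _ fun g _ => progFStr_psd E M₁ _ hρ₀
  show _ = matSupp (sigmaSum E M₁ ρ₀ d)
  apply le_antisymm
  · refine iSup_le fun f => ?_
    have h1 : matSupp (progFStr E M₁ f ρ₀)
        ≤ matSupp ((fun ρ => ∑ k, progF E M₁ k ρ)^[f.length] ρ₀) := by
      rw [hiter f.length]
      have := Finset.le_sup (f := fun g : Fin f.length → Fin m =>
        matSupp (progFStr E M₁ (List.ofFn g) ρ₀)) (Finset.mem_univ f.get)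
      rwa [List.ofFn_get] at this
    refine h1.trans (le_trans ?_ (hchain (f.length + 1)))
    rw [sigma_succ, matSupp_add (sigma_psd E M₁ hρ₀ _) (iter_psd E M₁ hρ₀ _)]
    exact le_sup_right
  · show matSupp (sigmaSum E M₁ ρ₀ d) ≤ _
    unfold sigmaSum
    rw [matSupp_sum _ _ fun i _ => iter_psd E M₁ hρ₀ i]
    refine Finset.sup_le fun i _ => ?_
    rw [hiter i]
    refine Finset.sup_le fun g _ => ?_
    exact le_iSup (fun f => matSupp (progFStr E M₁ f ρ₀)) (List.ofFn g)
end

section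
/- Let P = ({E_k : k ∈ K}, {M_0, M_1}) be a concurrent quantum program on ℂ^d with input a partial density operator ρ_0, and let F = ∑_{k∈K} F_k. Then the uniformly repeatedly reachable space satisfies H_URR = ⋂_{n≥0} ⋁{ supp(F_f(ρ_0)) : f ∈ K*, |f| ≥ n } = supp(∑_{i=d}^{2d−1} F^i(ρ_0)). -/
open Matrix
open scoped ComplexOrder

namespace URRAux

variable {d : ℕ}


variable {d : ℕ}

lemma mem_matSupp_iff {ρ : Matrix (Fin d) (Fin d) ℂ} {x : Fin d → ℂ} :
    x ∈ matSupp ρ ↔ ∃ z, ρ *ᵥ z = x := by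
  simp [matSupp, LinearMap.mem_range, Matrix.mulVecLin_apply]

lemma herm_dot {ρ : Matrix (Fin d) (Fin d) ℂ} (h : ρ.IsHermitian) (x y : Fin d → ℂ) :
    star (ρ *ᵥ x) ⬝ᵥ y = star x ⬝ᵥ (ρ *ᵥ y) := by
  rw [star_mulVec, h.eq, ← Matrix.dotProduct_mulVec]

lemma supp_le_iff {ρ σ : Matrix (Fin d) (Fin d) ℂ} (hρ : ρ.PosSemidef) (hσ : σ.PosSemidef) :
    matSupp ρ ≤ matSupp σ ↔ ∀ x, σ *ᵥ x = 0 → ρ *ᵥ x = 0 := by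
  constructor
  · intro h x hx
    have hm : ρ *ᵥ x ∈ matSupp σ := h (mem_matSupp_iff.mpr ⟨x, rfl⟩)
    obtain ⟨z, hz⟩ := mem_matSupp_iff.mp hm
    have h0 : star x ⬝ᵥ (ρ *ᵥ x) = 0 := by
      rw [← hz, ← herm_dot hσ.1 x z, hx]; simp
    exact (hρ.dotProduct_mulVec_zero_iff x).mp h0
  · intro h
    have hdisj : Disjoint (matSupp σ) (LinearMap.ker σ.mulVecLin) := by
      rw [Submodule.disjoint_def]
      intro v hv hk
      obtain ⟨w, hw⟩ := mem_matSupp_iff.mp hv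
      have hk' : σ *ᵥ v = 0 := by simpa [Matrix.mulVecLin_apply] using hk
      have h0 : star v ⬝ᵥ v = 0 := by
        nth_rewrite 1 [← hw]
        rw [herm_dot hσ.1 w v, hk']; simp
      exact dotProduct_star_self_eq_zero.mp h0
    have htop : matSupp σ ⊔ LinearMap.ker σ.mulVecLin = ⊤ := by
      apply Submodule.eq_top_of_finrank_eq
      have h1 := Submodule.finrank_sup_add_finrank_inf_eq (matSupp σ) (LinearMap.ker σ.mulVecLin)
      rw [hdisj.eq_bot, finrank_bot, add_zero] at h1
      rw [h1]
      exact LinearMap.finrank_range_add_finrank_ker σ.mulVecLin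
    intro y hy
    obtain ⟨z, hz⟩ := mem_matSupp_iff.mp hy
    have hmem : y ∈ matSupp σ ⊔ LinearMap.ker σ.mulVecLin := htop ▸ Submodule.mem_top
    obtain ⟨r, hr, k, hk, hrk⟩ := Submodule.mem_sup.mp hmem
    have hkσ : σ *ᵥ k = 0 := by simpa [Matrix.mulVecLin_apply] using hk
    have hkρ : ρ *ᵥ k = 0 := h k hkσ
    obtain ⟨w, hw⟩ := mem_matSupp_iff.mp hr
    have hk0 : k = 0 := by
      apply dotProduct_star_self_eq_zero.mp
      have h1 : star k ⬝ᵥ y = 0 := by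
        rw [← hz, ← herm_dot hρ.1 k z, hkρ]; simp
      have h2 : star k ⬝ᵥ r = 0 := by
        rw [← hw, ← herm_dot hσ.1 k w, hkσ]; simp
      have h3 : star k ⬝ᵥ (r + k) = 0 := by rw [hrk]; exact h1
      rwa [dotProduct_add, h2, zero_add] at h3
    rw [← hrk, hk0, add_zero]; exact hr

lemma matSupp_add {ρ σ : Matrix (Fin d) (Fin d) ℂ} (hρ : ρ.PosSemidef) (hσ : σ.PosSemidef) :
    matSupp (ρ + σ) = matSupp ρ ⊔ matSupp σ := by
  apply le_antisymm
  · rintro x hx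
    obtain ⟨z, hz⟩ := mem_matSupp_iff.mp hx
    rw [← hz, Matrix.add_mulVec]
    exact Submodule.add_mem_sup (mem_matSupp_iff.mpr ⟨z, rfl⟩) (mem_matSupp_iff.mpr ⟨z, rfl⟩)
  · have key : ∀ x, (ρ + σ) *ᵥ x = 0 → (ρ *ᵥ x = 0 ∧ σ *ᵥ x = 0) := by
      intro x hx
      have h0 : star x ⬝ᵥ (ρ *ᵥ x) + star x ⬝ᵥ (σ *ᵥ x) = 0 := by
        rw [← dotProduct_add, ← Matrix.add_mulVec, hx, dotProduct_zero]
      have h1 := (add_eq_zero_iff_of_nonneg (hρ.dotProduct_mulVec_nonneg x) (hσ.dotProduct_mulVec_nonneg x)).mp h0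
      exact ⟨(hρ.dotProduct_mulVec_zero_iff x).mp h1.1,
        (hσ.dotProduct_mulVec_zero_iff x).mp h1.2⟩
    exact sup_le ((supp_le_iff hρ (hρ.add hσ)).mpr fun x hx => (key x hx).1)
      ((supp_le_iff hσ (hρ.add hσ)).mpr fun x hx => (key x hx).2)

lemma psd_sum {ι : Type*} (s : Finset ι) (f : ι → Matrix (Fin d) (Fin d) ℂ)
    (h : ∀ i ∈ s, (f i).PosSemidef) : (∑ i ∈ s, f i).PosSemidef := by
  classical
  induction s using Finset.cons_induction with
  | empty => simpa using Matrix.PosSemidef.zero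
  | cons a s ha ih =>
    rw [Finset.sum_cons]
    exact (h a (Finset.mem_cons_self a s)).add (ih fun i hi => h i (Finset.mem_cons_of_mem hi))

lemma matSupp_sum {ι : Type*} (s : Finset ι) (f : ι → Matrix (Fin d) (Fin d) ℂ)
    (h : ∀ i ∈ s, (f i).PosSemidef) :
    matSupp (∑ i ∈ s, f i) = ⨆ i ∈ s, matSupp (f i) := by
  classical
  induction s using Finset.cons_induction with
  | empty => simp [matSupp]
  | cons a s ha ih =>
    rw [Finset.sum_cons,
      matSupp_add (h a (Finset.mem_cons_self a s))
        (psd_sum _ _ fun i hi => h i (Finset.mem_cons_of_mem hi)),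
      ih fun i hi => h i (Finset.mem_cons_of_mem hi)]
    simp [Finset.mem_cons, iSup_or, iSup_sup_eq, iSup_iSup_eq_left]



variable {d : ℕ}

lemma sum_mulVec' {ι : Type*} (s : Finset ι) (f : ι → Matrix (Fin d) (Fin d) ℂ)
    (x : Fin d → ℂ) : (∑ i ∈ s, f i) *ᵥ x = ∑ i ∈ s, f i *ᵥ x := by
  classical
  induction s using Finset.cons_induction with
  | empty => simp
  | cons a s ha ih => rw [Finset.sum_cons, Finset.sum_cons, Matrix.add_mulVec, ih]

lemma dotProduct_sum' {ι : Type*} (s : Finset ι) (v : Fin d → ℂ) (w : ι → Fin d → ℂ) :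
    v ⬝ᵥ (∑ i ∈ s, w i) = ∑ i ∈ s, v ⬝ᵥ w i := by
  classical
  induction s using Finset.cons_induction with
  | empty => simp
  | cons a s ha ih => rw [Finset.sum_cons, Finset.sum_cons, dotProduct_add, ih]

noncomputable def krausMap {ι : Type*} [Fintype ι] (A : ι → Matrix (Fin d) (Fin d) ℂ)
    (ρ : Matrix (Fin d) (Fin d) ℂ) : Matrix (Fin d) (Fin d) ℂ :=
  ∑ j, A j * ρ * (A j)ᴴ

variable {ι : Type*} [Fintype ι] (A : ι → Matrix (Fin d) (Fin d) ℂ)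

lemma krausMap_psd {ρ : Matrix (Fin d) (Fin d) ℂ} (hρ : ρ.PosSemidef) :
    (krausMap A ρ).PosSemidef :=
  psd_sum _ _ fun j _ => hρ.mul_mul_conjTranspose_same (A j)

lemma krausMap_add (ρ σ : Matrix (Fin d) (Fin d) ℂ) :
    krausMap A (ρ + σ) = krausMap A ρ + krausMap A σ := by
  simp [krausMap, Matrix.mul_add, Matrix.add_mul, Finset.sum_add_distrib]

lemma krausMap_zero : krausMap A 0 = 0 := by simp [krausMap]

lemma krausMap_sum {κ : Type*} (s : Finset κ) (f : κ → Matrix (Fin d) (Fin d) ℂ) :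
    krausMap A (∑ i ∈ s, f i) = ∑ i ∈ s, krausMap A (f i) := by
  classical
  induction s using Finset.cons_induction with
  | empty => simpa using krausMap_zero A
  | cons a s ha ih => rw [Finset.sum_cons, Finset.sum_cons, krausMap_add, ih]

lemma krausMap_mulVec (ρ : Matrix (Fin d) (Fin d) ℂ) (x : Fin d → ℂ) :
    krausMap A ρ *ᵥ x = ∑ j, A j *ᵥ (ρ *ᵥ ((A j)ᴴ *ᵥ x)) := by
  rw [krausMap, sum_mulVec']
  exact Finset.sum_congr rfl fun j _ => by
    rw [Matrix.mulVec_mulVec, Matrix.mulVec_mulVec]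

lemma conj_dot (B ρ : Matrix (Fin d) (Fin d) ℂ) (x : Fin d → ℂ) :
    star x ⬝ᵥ (B *ᵥ (ρ *ᵥ (Bᴴ *ᵥ x))) = star (Bᴴ *ᵥ x) ⬝ᵥ (ρ *ᵥ (Bᴴ *ᵥ x)) := by
  rw [star_mulVec, conjTranspose_conjTranspose, ← Matrix.dotProduct_mulVec]

lemma krausMap_dot (ρ : Matrix (Fin d) (Fin d) ℂ) (x : Fin d → ℂ) :
    star x ⬝ᵥ (krausMap A ρ *ᵥ x) = ∑ j, star ((A j)ᴴ *ᵥ x) ⬝ᵥ (ρ *ᵥ ((A j)ᴴ *ᵥ x)) := by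
  rw [krausMap_mulVec, dotProduct_sum']
  exact Finset.sum_congr rfl fun j _ => conj_dot (A j) ρ x

lemma krausMap_ker_mono {ρ σ : Matrix (Fin d) (Fin d) ℂ} (hρ : ρ.PosSemidef)
    (hσ : σ.PosSemidef) (h : ∀ x, σ *ᵥ x = 0 → ρ *ᵥ x = 0) :
    ∀ x, krausMap A σ *ᵥ x = 0 → krausMap A ρ *ᵥ x = 0 := by
  intro x hx
  have h0 : ∑ j, star ((A j)ᴴ *ᵥ x) ⬝ᵥ (σ *ᵥ ((A j)ᴴ *ᵥ x)) = 0 := by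
    rw [← krausMap_dot, hx, dotProduct_zero]
  have hz : ∀ j, σ *ᵥ ((A j)ᴴ *ᵥ x) = 0 := by
    intro j
    have := (Finset.sum_eq_zero_iff_of_nonneg (fun j _ => hσ.dotProduct_mulVec_nonneg ((A j)ᴴ *ᵥ x))).mp h0 j
      (Finset.mem_univ j)
    exact (hσ.dotProduct_mulVec_zero_iff _).mp this
  rw [krausMap_mulVec]
  apply Finset.sum_eq_zero
  intro j _
  rw [h _ (hz j), Matrix.mulVec_zero]

lemma krausMap_mono {ρ σ : Matrix (Fin d) (Fin d) ℂ} (hρ : ρ.PosSemidef)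
    (hσ : σ.PosSemidef) (h : matSupp ρ ≤ matSupp σ) :
    matSupp (krausMap A ρ) ≤ matSupp (krausMap A σ) :=
  (supp_le_iff (krausMap_psd A hρ) (krausMap_psd A hσ)).mpr
    (krausMap_ker_mono A hρ hσ ((supp_le_iff hρ hσ).mp h))


variable {m n : ℕ} (E : Fin m → Fin n → Matrix (Fin d) (Fin d) ℂ)
  (M₁ : Matrix (Fin d) (Fin d) ℂ)


variable {d m n : ℕ} (E : Fin m → Fin n → Matrix (Fin d) (Fin d) ℂ)
  (M₁ : Matrix (Fin d) (Fin d) ℂ)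

noncomputable def bigF : Matrix (Fin d) (Fin d) ℂ → Matrix (Fin d) (Fin d) ℂ :=
  fun ρ => ∑ k, progF E M₁ k ρ

lemma progF_eq (k : Fin m) : progF E M₁ k = krausMap (fun i => E k i * M₁) := by
  funext ρ
  refine Finset.sum_congr rfl fun i _ => ?_
  simp only [conjTranspose_mul, Matrix.mul_assoc]

lemma bigF_eq : bigF E M₁ = krausMap (fun p : Fin m × Fin n => E p.1 p.2 * M₁) := by
  funext ρ
  show ∑ k, progF E M₁ k ρ = _
  simp only [progF_eq, krausMap]
  rw [Fintype.sum_prod_type]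

lemma progF_psd (k : Fin m) {ρ : Matrix (Fin d) (Fin d) ℂ} (hρ : ρ.PosSemidef) :
    (progF E M₁ k ρ).PosSemidef := by
  rw [progF_eq]; exact krausMap_psd _ hρ

lemma bigF_psd {ρ : Matrix (Fin d) (Fin d) ℂ} (hρ : ρ.PosSemidef) :
    (bigF E M₁ ρ).PosSemidef := by
  rw [bigF_eq]; exact krausMap_psd _ hρ

lemma bigF_sum {κ : Type*} (s : Finset κ) (f : κ → Matrix (Fin d) (Fin d) ℂ) :
    bigF E M₁ (∑ i ∈ s, f i) = ∑ i ∈ s, bigF E M₁ (f i) := by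
  rw [bigF_eq]; exact krausMap_sum _ s f

lemma bigF_mono {ρ σ : Matrix (Fin d) (Fin d) ℂ} (hρ : ρ.PosSemidef)
    (hσ : σ.PosSemidef) (h : matSupp ρ ≤ matSupp σ) :
    matSupp (bigF E M₁ ρ) ≤ matSupp (bigF E M₁ σ) := by
  rw [bigF_eq]; exact krausMap_mono _ hρ hσ h

lemma bigF_iter_psd (ℓ : ℕ) {ρ : Matrix (Fin d) (Fin d) ℂ} (hρ : ρ.PosSemidef) :
    ((bigF E M₁)^[ℓ] ρ).PosSemidef := by
  induction ℓ with
  | zero => exact hρ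
  | succ ℓ ih => rw [Function.iterate_succ_apply']; exact bigF_psd E M₁ ih

lemma bigF_iter_sum (ℓ : ℕ) {κ : Type*} (s : Finset κ) (f : κ → Matrix (Fin d) (Fin d) ℂ) :
    (bigF E M₁)^[ℓ] (∑ i ∈ s, f i) = ∑ i ∈ s, (bigF E M₁)^[ℓ] (f i) := by
  induction ℓ with
  | zero => simp
  | succ ℓ ih =>
    rw [Function.iterate_succ_apply', ih, bigF_sum]
    exact Finset.sum_congr rfl fun i _ => (Function.iterate_succ_apply' _ _ _).symm

lemma bigF_iter_mono (ℓ : ℕ) {ρ σ : Matrix (Fin d) (Fin d) ℂ} (hρ : ρ.PosSemidef)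
    (hσ : σ.PosSemidef) (h : matSupp ρ ≤ matSupp σ) :
    matSupp ((bigF E M₁)^[ℓ] ρ) ≤ matSupp ((bigF E M₁)^[ℓ] σ) := by
  induction ℓ with
  | zero => exact h
  | succ ℓ ih =>
    rw [Function.iterate_succ_apply', Function.iterate_succ_apply']
    exact bigF_mono E M₁ (bigF_iter_psd E M₁ ℓ hρ) (bigF_iter_psd E M₁ ℓ hσ) ih

lemma supp_progF_le (k : Fin m) {ρ : Matrix (Fin d) (Fin d) ℂ} (hρ : ρ.PosSemidef) :
    matSupp (progF E M₁ k ρ) ≤ matSupp (bigF E M₁ ρ) := by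
  have h1 : bigF E M₁ ρ = ∑ k' , progF E M₁ k' ρ := rfl
  rw [h1, matSupp_sum _ _ fun k' _ => progF_psd E M₁ k' hρ]
  exact le_iSup_of_le k (le_iSup_of_le (Finset.mem_univ k) le_rfl)

lemma suppStr_le (f : List (Fin m)) :
    ∀ {ρ σ : Matrix (Fin d) (Fin d) ℂ}, ρ.PosSemidef → σ.PosSemidef →
      matSupp ρ ≤ matSupp σ →
      matSupp (progFStr E M₁ f ρ) ≤ matSupp ((bigF E M₁)^[f.length] σ) := by
  induction f with
  | nil => intro ρ σ _ _ h; exact h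
  | cons k t ih =>
    intro ρ σ hρ hσ h
    have h1 : matSupp (progF E M₁ k ρ) ≤ matSupp (bigF E M₁ σ) :=
      le_trans ((progF_eq E M₁ k ▸ krausMap_mono (fun i => E k i * M₁) hρ hσ h :
        matSupp (progF E M₁ k ρ) ≤ matSupp (progF E M₁ k σ))) (supp_progF_le E M₁ k hσ)
    have h2 := ih (progF_psd E M₁ k hρ) (bigF_psd E M₁ hσ) h1
    rw [List.length_cons, Function.iterate_succ_apply]
    exact h2

lemma iter_le_iSup (ℓ : ℕ) {ρ : Matrix (Fin d) (Fin d) ℂ} (hρ : ρ.PosSemidef) :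
    matSupp ((bigF E M₁)^[ℓ] ρ) ≤
      ⨆ f : List (Fin m), ⨆ _ : f.length = ℓ, matSupp (progFStr E M₁ f ρ) := by
  induction ℓ generalizing ρ with
  | zero => exact le_iSup_of_le ([] : List (Fin m)) (le_iSup_of_le rfl le_rfl)
  | succ ℓ ih =>
    rw [Function.iterate_succ_apply]
    have h1 : bigF E M₁ ρ = ∑ k, progF E M₁ k ρ := rfl
    rw [h1, bigF_iter_sum,
      matSupp_sum _ _ fun k _ => bigF_iter_psd E M₁ ℓ (progF_psd E M₁ k hρ)]
    apply iSup_le; intro k; apply iSup_le; intro _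
    refine le_trans (ih (progF_psd E M₁ k hρ)) ?_
    apply iSup_le; intro f; apply iSup_le; intro hf
    exact le_iSup_of_le (k :: f) (le_iSup_of_le (by simp [hf]) le_rfl)



variable {d m n : ℕ} (E : Fin m → Fin n → Matrix (Fin d) (Fin d) ℂ)
  (M₁ : Matrix (Fin d) (Fin d) ℂ)

lemma iter_le_window (hd : 0 < d) {ρ : Matrix (Fin d) (Fin d) ℂ} (hρ : ρ.PosSemidef) (j : ℕ) :
    matSupp ((bigF E M₁)^[j] ρ) ≤ matSupp (∑ i ∈ Finset.range d, (bigF E M₁)^[i] ρ) := by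
  set F := bigF E M₁ with hF
  set c : ℕ → Matrix (Fin d) (Fin d) ℂ := fun N => ∑ i ∈ Finset.range (N + 1), F^[i] ρ with hc
  have hpsd : ∀ N, (c N).PosSemidef := fun N =>
    psd_sum _ _ fun i _ => bigF_iter_psd E M₁ i hρ
  have hcsucc : ∀ N, c (N + 1) = ρ + F (c N) := by
    intro N
    show ∑ i ∈ Finset.range (N + 2), F^[i] ρ = ρ + F (∑ i ∈ Finset.range (N + 1), F^[i] ρ)
    rw [Finset.sum_range_succ', hF, bigF_sum]
    simp only [Function.iterate_succ_apply', Function.iterate_zero_apply]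
    rw [add_comm]
  have hterm : ∀ N, matSupp (F^[N] ρ) ≤ matSupp (c N) := by
    intro N
    have h1 : c N = (∑ i ∈ Finset.range N, F^[i] ρ) + F^[N] ρ := Finset.sum_range_succ _ _
    rw [h1, matSupp_add (psd_sum _ _ fun i _ => bigF_iter_psd E M₁ i hρ)
      (bigF_iter_psd E M₁ N hρ)]
    exact le_sup_right
  have hmono_step : ∀ N, matSupp (c N) ≤ matSupp (c (N + 1)) := by
    intro N
    have h1 : c (N + 1) = c N + F^[N + 1] ρ := Finset.sum_range_succ _ _
    rw [h1, matSupp_add (hpsd N) (bigF_iter_psd E M₁ (N + 1) hρ)]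
    exact le_sup_left
  have hmono : ∀ a b, a ≤ b → matSupp (c a) ≤ matSupp (c b) := by
    intro a b hab
    induction b, hab using Nat.le_induction with
    | base => exact le_rfl
    | succ b hab ih => exact le_trans ih (hmono_step b)
  have hstep : ∀ N, matSupp (c N) = matSupp (c (N + 1)) →
      matSupp (c (N + 1)) = matSupp (c (N + 2)) := by
    intro N h
    have hFeq : matSupp (F (c N)) = matSupp (F (c (N + 1))) :=
      le_antisymm (bigF_mono E M₁ (hpsd N) (hpsd (N + 1)) h.le)
        (bigF_mono E M₁ (hpsd (N + 1)) (hpsd N) h.ge)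
    rw [hcsucc N, hcsucc (N + 1),
      matSupp_add hρ (bigF_psd E M₁ (hpsd N)),
      matSupp_add hρ (bigF_psd E M₁ (hpsd (N + 1))), hFeq]
  have hstab : ∀ N, matSupp (c N) = matSupp (c (N + 1)) →
      ∀ k, N ≤ k → matSupp (c k) = matSupp (c N) := by
    intro N h
    have hall : ∀ k, N ≤ k → matSupp (c k) = matSupp (c (k + 1)) := by
      intro k hk
      induction k, hk using Nat.le_induction with
      | base => exact h
      | succ k hk ih => exact hstep _ ih
    intro k hk
    induction k, hk using Nat.le_induction with
    | base => rfl
    | succ k hk ih => rw [← hall k hk]; exact ih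
  have hex : ∃ N, N < d ∧ matSupp (c N) = matSupp (c (N + 1)) := by
    by_contra hcon
    push_neg at hcon
    have hstrict : ∀ N, N < d →
        Module.finrank ℂ (matSupp (c N)) < Module.finrank ℂ (matSupp (c (N + 1))) :=
      fun N hN => Submodule.finrank_lt_finrank_of_lt
        (lt_of_le_of_ne (hmono_step N) (hcon N hN))
    have hge : ∀ k, k ≤ d → Module.finrank ℂ (matSupp (c 0)) + k ≤
        Module.finrank ℂ (matSupp (c k)) := by
      intro k hk
      induction k with
      | zero => simp
      | succ k ih =>
        have h1 := ih (by omega)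
        have h2 := hstrict k (by omega)
        omega
    have hled : Module.finrank ℂ (matSupp (c d)) ≤ d := by
      have h1 := Submodule.finrank_le (matSupp (c d))
      rwa [Module.finrank_fin_fun] at h1
    have h0 : Module.finrank ℂ (matSupp (c 0)) = 0 := by
      have := hge d le_rfl; omega
    have hc0 : matSupp (c 0) = ⊥ := Submodule.finrank_eq_zero.mp h0
    have hcρ : c 0 = ρ := by simp [hc]
    have hρ0 : ∀ x, ρ *ᵥ x = 0 := by
      intro x
      have hx : ρ *ᵥ x ∈ matSupp (c 0) := by
        rw [hcρ]; exact mem_matSupp_iff.mpr ⟨x, rfl⟩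
      rw [hc0] at hx
      simpa using hx
    have hc1 : ∀ x, c 1 *ᵥ x = 0 := by
      intro x
      rw [hcsucc 0, hcρ, Matrix.add_mulVec, hρ0, zero_add, hF, bigF_eq, krausMap_mulVec]
      apply Finset.sum_eq_zero
      intro j _
      rw [hρ0, Matrix.mulVec_zero]
    have h1bot : matSupp (c 1) = ⊥ := by
      rw [Submodule.eq_bot_iff]
      intro y hy
      obtain ⟨z, hz⟩ := mem_matSupp_iff.mp hy
      rw [← hz, hc1]
    exact hcon 0 hd (by rw [hc0, h1bot])
  obtain ⟨N, hNd, hN⟩ := hex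
  have hcd : c (d - 1) = ∑ i ∈ Finset.range d, F^[i] ρ := by
    have hdd : d - 1 + 1 = d := by omega
    show ∑ i ∈ Finset.range (d - 1 + 1), F^[i] ρ = _
    rw [hdd]
  rw [← hcd]
  rcases le_total j (d - 1) with hj | hj
  · exact le_trans (hterm j) (hmono _ _ hj)
  · have e1 : matSupp (c j) = matSupp (c N) := hstab N hN j (by omega)
    have e2 : matSupp (c (d - 1)) = matSupp (c N) := hstab N hN (d - 1) (by omega)
    exact le_trans (hterm j) (by rw [e1, ← e2])



variable {d m n : ℕ} (E : Fin m → Fin n → Matrix (Fin d) (Fin d) ℂ)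
  (M₁ : Matrix (Fin d) (Fin d) ℂ)

noncomputable def window (ρ₀ : Matrix (Fin d) (Fin d) ℂ) (N : ℕ) :
    Matrix (Fin d) (Fin d) ℂ :=
  ∑ i ∈ Finset.range d, (bigF E M₁)^[N + i] ρ₀

variable {ρ₀ : Matrix (Fin d) (Fin d) ℂ}

lemma window_psd (hρ₀ : ρ₀.PosSemidef) (N : ℕ) : (window E M₁ ρ₀ N).PosSemidef :=
  psd_sum _ _ fun i _ => bigF_iter_psd E M₁ (N + i) hρ₀

lemma le_window (hd : 0 < d) (hρ₀ : ρ₀.PosSemidef) (N ℓ : ℕ) (hNℓ : N ≤ ℓ) :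
    matSupp ((bigF E M₁)^[ℓ] ρ₀) ≤ matSupp (window E M₁ ρ₀ N) := by
  have h1 := iter_le_window E M₁ hd (bigF_iter_psd E M₁ N hρ₀) (ℓ - N)
  have h2 : (bigF E M₁)^[ℓ - N] ((bigF E M₁)^[N] ρ₀) = (bigF E M₁)^[ℓ] ρ₀ := by
    rw [← Function.iterate_add_apply]; congr 1; omega
  have h3 : ∑ i ∈ Finset.range d, (bigF E M₁)^[i] ((bigF E M₁)^[N] ρ₀)
      = window E M₁ ρ₀ N := by
    refine Finset.sum_congr rfl fun i _ => ?_
    rw [← Function.iterate_add_apply]; congr 1; omega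
  rwa [h2, h3] at h1

lemma window_succ (N : ℕ) : window E M₁ ρ₀ (N + 1) = bigF E M₁ (window E M₁ ρ₀ N) := by
  show ∑ i ∈ Finset.range d, (bigF E M₁)^[N + 1 + i] ρ₀ = _
  rw [window, bigF_sum]
  refine Finset.sum_congr rfl fun i _ => ?_
  have h1 : N + 1 + i = (N + i) + 1 := by omega
  rw [h1, Function.iterate_succ_apply']

lemma window_anti_step (hd : 0 < d) (hρ₀ : ρ₀.PosSemidef) (N : ℕ) :
    matSupp (window E M₁ ρ₀ (N + 1)) ≤ matSupp (window E M₁ ρ₀ N) := by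
  rw [show window E M₁ ρ₀ (N + 1) = ∑ i ∈ Finset.range d, (bigF E M₁)^[N + 1 + i] ρ₀ from rfl,
    matSupp_sum _ _ fun i _ => bigF_iter_psd E M₁ (N + 1 + i) hρ₀]
  apply iSup_le; intro i; apply iSup_le; intro _
  exact le_window E M₁ hd hρ₀ N (N + 1 + i) (by omega)

lemma window_anti (hd : 0 < d) (hρ₀ : ρ₀.PosSemidef) (a b : ℕ) (hab : a ≤ b) :
    matSupp (window E M₁ ρ₀ b) ≤ matSupp (window E M₁ ρ₀ a) := by
  induction b, hab using Nat.le_induction with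
  | base => exact le_rfl
  | succ b hab ih => exact le_trans (window_anti_step E M₁ hd hρ₀ b) ih

lemma window_stab (hd : 0 < d) (hρ₀ : ρ₀.PosSemidef) (M : ℕ) :
    matSupp (window E M₁ ρ₀ d) ≤ matSupp (window E M₁ ρ₀ M) := by
  by_cases hcase : ∃ N, N < d ∧ matSupp (window E M₁ ρ₀ N) = matSupp (window E M₁ ρ₀ (N + 1))
  · obtain ⟨N, hNd, hN⟩ := hcase
    have hall : ∀ k, N ≤ k →
        matSupp (window E M₁ ρ₀ k) = matSupp (window E M₁ ρ₀ (k + 1)) := by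
      intro k hk
      induction k, hk using Nat.le_induction with
      | base => exact hN
      | succ k hk ih =>
        rw [window_succ E M₁ k, window_succ E M₁ (k + 1)]
        exact le_antisymm
          (bigF_mono E M₁ (window_psd E M₁ hρ₀ k) (window_psd E M₁ hρ₀ (k + 1)) ih.le)
          (bigF_mono E M₁ (window_psd E M₁ hρ₀ (k + 1)) (window_psd E M₁ hρ₀ k) ih.ge)
    have heq : ∀ k, N ≤ k →
        matSupp (window E M₁ ρ₀ k) = matSupp (window E M₁ ρ₀ N) := by
      intro k hk
      induction k, hk using Nat.le_induction with
      | base => rfl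
      | succ k hk ih => rw [← hall k hk]; exact ih
    rcases le_total M N with hMN | hNM
    · rw [heq d (by omega)]
      exact window_anti E M₁ hd hρ₀ M N hMN
    · rw [heq d (by omega), ← heq M hNM]
  · push_neg at hcase
    have hstrict : ∀ N, N < d →
        Module.finrank ℂ (matSupp (window E M₁ ρ₀ (N + 1))) <
          Module.finrank ℂ (matSupp (window E M₁ ρ₀ N)) :=
      fun N hNd => Submodule.finrank_lt_finrank_of_lt
        (lt_of_le_of_ne (window_anti_step E M₁ hd hρ₀ N) (Ne.symm (hcase N hNd)))
    have hge : ∀ k, k ≤ d → Module.finrank ℂ (matSupp (window E M₁ ρ₀ k)) + k ≤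
        Module.finrank ℂ (matSupp (window E M₁ ρ₀ 0)) := by
      intro k hk
      induction k with
      | zero => simp
      | succ k ih =>
        have h1 := ih (by omega)
        have h2 := hstrict k (by omega)
        omega
    have hled : Module.finrank ℂ (matSupp (window E M₁ ρ₀ 0)) ≤ d := by
      have h1 := Submodule.finrank_le (matSupp (window E M₁ ρ₀ 0))
      rwa [Module.finrank_fin_fun] at h1
    have h0 : Module.finrank ℂ (matSupp (window E M₁ ρ₀ d)) = 0 := by
      have := hge d le_rfl; omega
    rw [Submodule.finrank_eq_zero.mp h0]
    exact bot_le


end URRAux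

theorem uniformly_repeatedly_reachable_space_eq {d m n : ℕ}
    (E : Fin m → Fin n → Matrix (Fin d) (Fin d) ℂ)
    (M₀ M₁ : Matrix (Fin d) (Fin d) ℂ)
    (hE : ∀ k, ∑ i, (E k i)ᴴ * E k i = 1)
    (hM : M₀ᴴ * M₀ + M₁ᴴ * M₁ = 1)
    (ρ₀ : Matrix (Fin d) (Fin d) ℂ) (hρ₀ : ρ₀.PosSemidef) (htr : ρ₀.trace ≤ 1) :
    (⨅ N : ℕ, ⨆ f : List (Fin m), ⨆ _ : N ≤ f.length, matSupp (progFStr E M₁ f ρ₀))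
      = matSupp (∑ i ∈ Finset.Ico d (2 * d), (fun ρ => ∑ k, progF E M₁ k ρ)^[i] ρ₀) := by
  classical
  rcases Nat.eq_zero_or_pos d with hd0 | hd
  · subst hd0
    haveI : Subsingleton (Submodule ℂ (Fin 0 → ℂ)) :=
      Submodule.subsingleton_iff ℂ |>.mpr inferInstance
    exact Subsingleton.elim _ _
  · have hFb : (fun ρ => ∑ k, progF E M₁ k ρ) = URRAux.bigF E M₁ := rfl
    rw [hFb]
    have hτ : ∑ i ∈ Finset.Ico d (2 * d), (URRAux.bigF E M₁)^[i] ρ₀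
        = URRAux.window E M₁ ρ₀ d := by
      rw [Finset.sum_Ico_eq_sum_range]
      have h2 : 2 * d - d = d := by omega
      rw [h2]
      rfl
    rw [hτ]
    apply le_antisymm
    · refine le_trans (iInf_le _ d) ?_
      apply iSup_le; intro f; apply iSup_le; intro hf
      refine le_trans (URRAux.suppStr_le E M₁ f hρ₀ hρ₀ le_rfl) ?_
      exact URRAux.le_window E M₁ hd hρ₀ d f.length hf
    · apply le_iInf; intro N
      refine le_trans (URRAux.window_stab E M₁ hd hρ₀ N) ?_
      rw [show URRAux.window E M₁ ρ₀ N
          = ∑ i ∈ Finset.range d, (URRAux.bigF E M₁)^[N + i] ρ₀ from rfl,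
        URRAux.matSupp_sum _ _ fun i _ => URRAux.bigF_iter_psd E M₁ (N + i) hρ₀]
      apply iSup_le; intro i; apply iSup_le; intro _
      refine le_trans (URRAux.iter_le_iSup E M₁ (N + i) hρ₀) ?_
      apply iSup_le; intro f; apply iSup_le; intro hf
      exact le_iSup_of_le f (le_iSup_of_le (by omega) le_rfl)
end

section
/- Let P = ({E_k : k ∈ K}, {M_0, M_1}) be a concurrent quantum program on ℂ^d with input a partial density operator ρ_0. Then P terminates in the biggest schedule S = K^ω if and only if it uniformly terminates in S; that is, (for every infinite path s : ℕ → K there exists n with F_{s[n]}(ρ_0) = 0) if and only if (there exists n such that F_{s[n]}(ρ_0) = 0 for every infinite path s). -/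
open Matrix
open scoped ComplexOrder

/-- The length-`N` prefix `s[N] = s₁⋯s_N` of an infinite path `s`. -/
def prefixOf {m : ℕ} (s : ℕ → Fin m) (N : ℕ) : List (Fin m) :=
  List.ofFn fun i : Fin N => s i

lemma progF_zero {d m n : ℕ} (E : Fin m → Fin n → Matrix (Fin d) (Fin d) ℂ)
    (M₁ : Matrix (Fin d) (Fin d) ℂ) (k : Fin m) : progF E M₁ k 0 = 0 := by
  simp [progF]

lemma progFStr_zero {d m n : ℕ} (E : Fin m → Fin n → Matrix (Fin d) (Fin d) ℂ)
    (M₁ : Matrix (Fin d) (Fin d) ℂ) : ∀ f : List (Fin m), progFStr E M₁ f 0 = 0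
  | [] => rfl
  | k :: f => by rw [progFStr, progF_zero]; exact progFStr_zero E M₁ f

lemma progFStr_append {d m n : ℕ} (E : Fin m → Fin n → Matrix (Fin d) (Fin d) ℂ)
    (M₁ : Matrix (Fin d) (Fin d) ℂ) :
    ∀ (f g : List (Fin m)) (ρ : Matrix (Fin d) (Fin d) ℂ),
      progFStr E M₁ (f ++ g) ρ = progFStr E M₁ g (progFStr E M₁ f ρ)
  | [], g, ρ => rfl
  | k :: f, g, ρ => by
      rw [List.cons_append, progFStr, progFStr, progFStr_append E M₁ f g]

lemma prefixOf_succ {m : ℕ} (s : ℕ → Fin m) (N : ℕ) :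
    prefixOf s (N + 1) = prefixOf s N ++ [s N] := by
  rw [prefixOf, List.ofFn_succ', List.concat_eq_append]
  rfl

lemma progFStr_mono {d m n : ℕ} (E : Fin m → Fin n → Matrix (Fin d) (Fin d) ℂ)
    (M₁ : Matrix (Fin d) (Fin d) ℂ) (ρ₀ : Matrix (Fin d) (Fin d) ℂ)
    (s : ℕ → Fin m) {N N' : ℕ} (hNN : N ≤ N')
    (h : progFStr E M₁ (prefixOf s N) ρ₀ = 0) :
    progFStr E M₁ (prefixOf s N') ρ₀ = 0 := by
  induction N' , hNN using Nat.le_induction with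
  | base => exact h
  | succ N' hle ih =>
      rw [prefixOf_succ, progFStr_append, ih, progFStr_zero]

theorem terminates_iff_uniformly_terminates {d m n : ℕ}
    (E : Fin m → Fin n → Matrix (Fin d) (Fin d) ℂ)
    (M₀ M₁ : Matrix (Fin d) (Fin d) ℂ)
    (hE : ∀ k, ∑ i, (E k i)ᴴ * E k i = 1)
    (hM : M₀ᴴ * M₀ + M₁ᴴ * M₁ = 1)
    (ρ₀ : Matrix (Fin d) (Fin d) ℂ) (hρ₀ : ρ₀.PosSemidef) (htr : ρ₀.trace ≤ 1) :
    (∀ s : ℕ → Fin m, ∃ N : ℕ, progFStr E M₁ (prefixOf s N) ρ₀ = 0)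
      ↔ (∃ N : ℕ, ∀ s : ℕ → Fin m, progFStr E M₁ (prefixOf s N) ρ₀ = 0) := by
  constructor
  · intro h
    -- compactness of the path space
    set U : ℕ → Set (ℕ → Fin m) :=
      fun N => {s | progFStr E M₁ (prefixOf s N) ρ₀ = 0} with hU
    have hopen : ∀ N, IsOpen (U N) := by
      intro N
      have : U N = (fun (s : ℕ → Fin m) (i : Fin N) => s i) ⁻¹'
          {g : Fin N → Fin m | progFStr E M₁ (List.ofFn g) ρ₀ = 0} := rfl
      rw [this]
      have hc : Continuous (fun (s : ℕ → Fin m) (i : Fin N) => s i) :=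
        continuous_pi fun i : Fin N => continuous_apply (A := fun _ : ℕ => Fin m) (i : ℕ)
      exact hc.isOpen_preimage _
        (isOpen_discrete {g : Fin N → Fin m | progFStr E M₁ (List.ofFn g) ρ₀ = 0})
    have hcover : (Set.univ : Set (ℕ → Fin m)) ⊆ ⋃ N, U N := by
      intro s _
      obtain ⟨N, hN⟩ := h s
      exact Set.mem_iUnion.2 ⟨N, hN⟩
    obtain ⟨t, ht⟩ := isCompact_univ.elim_finite_subcover U hopen hcover
    refine ⟨t.sup id, fun s => ?_⟩
    obtain ⟨N, hNt, hsN⟩ := Set.mem_iUnion₂.1 (ht (Set.mem_univ s))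
    exact progFStr_mono E M₁ ρ₀ s (Finset.le_sup (f := id) hNt) hsN
  · rintro ⟨N, hN⟩ s
    exact ⟨N, hN s⟩
end
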